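/- Let T be a quasi *-paranormal bounded operator on a complex Hilbert space H and let M be a closed subspace of H invariant under T. Then the restriction of T to M is also quasi *-paranormal (as an operator on M). -/

import Mathlib

open scoped InnerProductSpace

theorem quasi_star_paranormal_restrict
    {H : Type*} [NormedAddCommGroup H] [InnerProductSpace ℂ H] [CompleteSpace H]
    (T : H →L[ℂ] H)
    (hqsp : ∀ x : H, ‖(ContinuousLinearMap.adjoint T) (T x)‖ ^ 2 ≤ ‖(T ^ 3) x‖ * ‖T x‖)
    (M : Submodule ℂ H) (hMc : IsClosed (M : Set H))
    (hinv : ∀ x ∈ M, T x ∈ M) :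
    haveI : CompleteSpace M := hMc.completeSpace_coe
    ∀ x : M,
      ‖(ContinuousLinearMap.adjoint
          (((T.comp M.subtypeL).codRestrict M (fun y => hinv y y.2))))
          ((((T.comp M.subtypeL).codRestrict M (fun y => hinv y y.2))) x)‖ ^ 2 ≤
        ‖((((T.comp M.subtypeL).codRestrict M (fun y => hinv y y.2))) ^ 3) x‖ *
          ‖(((T.comp M.subtypeL).codRestrict M (fun y => hinv y y.2))) x‖ := by
  haveI : CompleteSpace M := hMc.completeSpace_coe
  intro x
  set S : M →L[ℂ] M := ((T.comp M.subtypeL).codRestrict M (fun y => hinv y y.2)) with hS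
  have hScoe : ∀ y : M, (S y : H) = T y := fun y => rfl
  -- adjoint of S is projection of adjoint of T
  have hadj : ∀ y : M, (ContinuousLinearMap.adjoint S) y
      = Submodule.orthogonalProjectionOnto M ((ContinuousLinearMap.adjoint T) (y : H)) := by
    intro y
    apply ext_inner_right ℂ
    intro z
    rw [ContinuousLinearMap.adjoint_inner_left]
    have h0 := Submodule.starProjection_inner_eq_zero (K := M)
      ((ContinuousLinearMap.adjoint T) (y : H)) (z : H) z.2
    rw [inner_sub_left, sub_eq_zero] at h0
    calc ⟪y, S z⟫_ℂ = ⟪(y : H), T (z : H)⟫_ℂ := by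
            rw [Submodule.coe_inner, hScoe]
      _ = ⟪(ContinuousLinearMap.adjoint T) (y : H), (z : H)⟫_ℂ := by
            rw [ContinuousLinearMap.adjoint_inner_left]
      _ = ⟪((Submodule.orthogonalProjectionOnto M ((ContinuousLinearMap.adjoint T) (y : H)) : M) : H),
            (z : H)⟫_ℂ := h0
      _ = ⟪(Submodule.orthogonalProjectionOnto M ((ContinuousLinearMap.adjoint T) (y : H)) : M), z⟫_ℂ := by
            rw [Submodule.coe_inner]
  -- norm bound on adjoint
  have hnorm : ‖(ContinuousLinearMap.adjoint S) (S x)‖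
      ≤ ‖(ContinuousLinearMap.adjoint T) (T (x : H))‖ := by
    rw [hadj]
    calc ‖Submodule.orthogonalProjectionOnto M ((ContinuousLinearMap.adjoint T) ((S x : M) : H))‖
        ≤ ‖Submodule.orthogonalProjectionOnto M‖ * ‖((ContinuousLinearMap.adjoint T) ((S x : M) : H))‖ :=
          (Submodule.orthogonalProjectionOnto M).le_opNorm _
      _ ≤ 1 * ‖((ContinuousLinearMap.adjoint T) ((S x : M) : H))‖ :=
          mul_le_mul_of_nonneg_right (Submodule.orthogonalProjectionOnto_norm_le M) (norm_nonneg _)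
      _ = ‖((ContinuousLinearMap.adjoint T) ((S x : M) : H))‖ := one_mul _
      _ = ‖(ContinuousLinearMap.adjoint T) (T (x : H))‖ := by rw [hScoe]
  -- S^3 x = T^3 x
  have hS3 : ((S ^ 3) x : H) = (T ^ 3) (x : H) := by
    show ((S (S (S x)) : M) : H) = T (T (T (x : H)))
    rw [hScoe, hScoe, hScoe]
  have hSx : ‖S x‖ = ‖T (x : H)‖ := by
    rw [show ‖S x‖ = ‖(S x : H)‖ from rfl, hScoe]
  have hS3n : ‖(S ^ 3) x‖ = ‖(T ^ 3) (x : H)‖ := by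
    rw [show ‖(S ^ 3) x‖ = ‖((S ^ 3) x : H)‖ from rfl, hS3]
  calc ‖(ContinuousLinearMap.adjoint S) (S x)‖ ^ 2
      ≤ ‖(ContinuousLinearMap.adjoint T) (T (x : H))‖ ^ 2 := by
        exact pow_le_pow_left₀ (norm_nonneg _) hnorm 2
    _ ≤ ‖(T ^ 3) (x : H)‖ * ‖T (x : H)‖ := hqsp (x : H)
    _ = ‖(S ^ 3) x‖ * ‖S x‖ := by rw [hS3n, hSx]
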